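/- Let (A, m) be a Noetherian local ring, let I ⊆ m be an ideal, let M be a finitely generated A-module, and let L ⊆ K be submodules of M such that the length λ(K/L) is finite. Then λ(K/L) = Σ_{n ≥ 0} λ( ((K ∩ IⁿM) + I^{n+1}M) / ((L ∩ IⁿM) + I^{n+1}M) ), and moreover all but finitely many of the summands are zero. (Dade's Lemma, Lemma 2.7 of the paper.) -/

import Mathlib

open Order

section OrderInfra


/-- Decompose an `LTSeries` in a product of partial orders. -/
lemma ltSeries_prod_decomp {α β : Type*} [PartialOrder α] [PartialOrder β] :
    ∀ (n : ℕ) (p : LTSeries (α × β)), p.length = n →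
    ∃ (a : LTSeries α) (b : LTSeries β), p.length ≤ a.length + b.length ∧
      a.last = p.last.1 ∧ b.last = p.last.2 := by
  intro n
  induction n with
  | zero =>
    intro p hp
    exact ⟨RelSeries.singleton _ p.last.1, RelSeries.singleton _ p.last.2,
      by simp [hp], RelSeries.last_singleton _, RelSeries.last_singleton _⟩
  | succ n ih =>
    intro p hp
    obtain ⟨a, b, h1, h2, h3⟩ := ih p.eraseLast (by simp [hp])
    have hrel : p.eraseLast.last < p.last := p.eraseLast_last_rel_last (by omega)
    have hle1 : p.eraseLast.last.1 ≤ p.last.1 := hrel.le.1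
    have hle2 : p.eraseLast.last.2 ≤ p.last.2 := hrel.le.2
    have hlen : p.eraseLast.length = n := by simp [hp]
    rw [hlen] at h1
    rcases Prod.lt_iff.1 hrel with ⟨h4, h5⟩ | ⟨h4, h5⟩
    · rcases eq_or_lt_of_le hle2 with he | hlt
      · exact ⟨a.snoc p.last.1 (h2 ▸ h4), b, by simp [hp]; omega,
          RelSeries.last_snoc _ _ _, h3.trans he⟩
      · exact ⟨a.snoc p.last.1 (h2 ▸ h4), b.snoc p.last.2 (h3 ▸ hlt),
          by simp [hp]; omega,
          RelSeries.last_snoc _ _ _, RelSeries.last_snoc _ _ _⟩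
    · rcases eq_or_lt_of_le hle1 with he | hlt
      · exact ⟨a, b.snoc p.last.2 (h3 ▸ h5), by simp [hp]; omega,
          h2.trans he, RelSeries.last_snoc _ _ _⟩
      · exact ⟨a.snoc p.last.1 (h2 ▸ hlt), b.snoc p.last.2 (h3 ▸ h5),
          by simp [hp]; omega,
          RelSeries.last_snoc _ _ _, RelSeries.last_snoc _ _ _⟩

/-- The relative length of an interval `[P, Q]` in a preorder, as an element of `ℕ∞`. -/
noncomputable def iLen {α : Type*} [Preorder α] (P Q : α) : ℕ∞ :=
  (Order.krullDim (Set.Icc P Q)).unbotD 0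

lemma krullDim_eq_coe_unbot' (γ : Type*) [Preorder γ] [Nonempty γ] :
    krullDim γ = (((krullDim γ).unbotD 0 : ℕ∞) : WithBot ℕ∞) := by
  have h0 : krullDim γ ≠ ⊥ := by
    intro h
    have := krullDim_nonneg (α := γ)
    rw [h] at this
    simp at this
  cases h : krullDim γ with
  | bot => exact absurd h h0
  | coe d => simp

lemma iLen_eq_iSup {α : Type*} [Preorder α] {P Q : α} (h : P ≤ Q) :
    iLen P Q = ⨆ p : LTSeries ↥(Set.Icc P Q), (p.length : ℕ∞) := by
  haveI : Nonempty ↥(Set.Icc P Q) := ⟨⟨P, le_refl P, h⟩⟩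
  apply le_antisymm
  · rw [iLen, WithBot.unbotD_le_iff (by simp)]
    exact iSup_le fun p => by
      exact_mod_cast WithBot.coe_le_coe.2 <|
        le_iSup (fun p : LTSeries ↥(Set.Icc P Q) => (p.length : ℕ∞)) p
  · apply iSup_le fun p => ?_
    have h1 := LTSeries.length_le_krullDim p
    rw [krullDim_eq_coe_unbot'] at h1
    exact_mod_cast h1


end OrderInfra

section IntervalLength

variable {α : Type*} [Lattice α] [IsModularLattice α]


variable {α : Type*} [Lattice α] [IsModularLattice α]

omit [IsModularLattice α] in
lemma iLen_self (P : α) : iLen P P = 0 := by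
  haveI : Unique ↥(Set.Icc P P) :=
    { default := ⟨P, le_refl P, le_refl P⟩
      uniq := fun x => Subtype.ext (le_antisymm x.2.2 x.2.1) }
  rw [iLen, krullDim_eq_zero_of_unique]
  rfl

omit [IsModularLattice α] in
lemma iLen_eq_zero_iff {P Q : α} (h : P ≤ Q) : iLen P Q = 0 ↔ P = Q := by
  constructor
  · intro h0
    by_contra hne
    have hlt : P < Q := h.lt_of_ne hne
    set p : LTSeries ↥(Set.Icc P Q) :=
      (RelSeries.singleton _ (⟨P, le_refl P, h⟩ : ↥(Set.Icc P Q))).snoc ⟨Q, h, le_refl Q⟩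
        (by
          rw [RelSeries.last_singleton]
          exact (show (⟨P, le_refl P, h⟩ : ↥(Set.Icc P Q)) < ⟨Q, h, le_refl Q⟩ from hlt)) with hp
    have hle : (p.length : ℕ∞) ≤ iLen P Q := by
      rw [iLen_eq_iSup h]; exact le_iSup (fun p : LTSeries ↥(Set.Icc P Q) => (p.length : ℕ∞)) p
    have hl : p.length = 1 := by simp [hp]
    rw [h0, hl] at hle
    simp at hle
  · rintro rfl; exact iLen_self P

lemma iLen_diamond (a b : α) : iLen (a ⊓ b) a = iLen b (a ⊔ b) := by
  rw [iLen, iLen, krullDim_eq_of_orderIso (infIccOrderIsoIccSup a b)]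

lemma iLen_add {P Q R : α} (h1 : P ≤ Q) (h2 : Q ≤ R) :
    iLen P R = iLen P Q + iLen Q R := by
  haveI n1 : Nonempty ↥(Set.Icc P Q) := ⟨⟨P, le_refl P, h1⟩⟩
  haveI n2 : Nonempty ↥(Set.Icc Q R) := ⟨⟨Q, le_refl Q, h2⟩⟩
  rw [iLen_eq_iSup (h1.trans h2), iLen_eq_iSup h1, iLen_eq_iSup h2]
  apply le_antisymm
  · apply iSup_le fun p => ?_
    set f : ↥(Set.Icc P R) → ↥(Set.Icc P Q) × ↥(Set.Icc Q R) := fun x =>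
      (⟨x.1 ⊓ Q, le_inf x.2.1 h1, inf_le_right⟩, ⟨x.1 ⊔ Q, le_sup_right, sup_le x.2.2 h2⟩)
      with hfdef
    have hf : StrictMono f := by
      intro x y hxy
      have hxy1 : (x : α) ≤ (y : α) := hxy.le
      have hle : f x ≤ f y :=
        ⟨Subtype.mk_le_mk.2 (inf_le_inf_right _ hxy1),
         Subtype.mk_le_mk.2 (sup_le_sup_right hxy1 _)⟩
      refine lt_of_le_of_ne hle fun hEq => ?_
      have e1 : (x : α) ⊓ Q = (y : α) ⊓ Q := congrArg (fun z => (z.1 : α)) hEq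
      have e2 : (x : α) ⊔ Q = (y : α) ⊔ Q := congrArg (fun z => (z.2 : α)) hEq
      exact hxy.ne (Subtype.ext (eq_of_le_of_inf_le_of_sup_le hxy1 e1.ge e2.ge))
    obtain ⟨a, b, hab, -, -⟩ := ltSeries_prod_decomp _ (p.map f hf) rfl
    have hlen : p.length ≤ a.length + b.length := by simpa using hab
    calc (p.length : ℕ∞) ≤ (a.length : ℕ∞) + (b.length : ℕ∞) := by exact_mod_cast hlen
      _ ≤ _ := add_le_add (le_iSup (fun a : LTSeries ↥(Set.Icc P Q) => (a.length : ℕ∞)) a)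
          (le_iSup (fun b : LTSeries ↥(Set.Icc Q R) => (b.length : ℕ∞)) b)
  · apply ENat.iSup_add_iSup_le
    intro p q
    set p' : LTSeries ↥(Set.Icc P R) := p.map (fun x => ⟨x.1, x.2.1, x.2.2.trans h2⟩)
      (fun x y hxy => Subtype.mk_lt_mk.2 hxy) with hp'
    set q' : LTSeries ↥(Set.Icc P R) := q.map (fun x => ⟨x.1, h1.trans x.2.1, x.2.2⟩)
      (fun x y hxy => Subtype.mk_lt_mk.2 hxy) with hq'
    have hph : p'.last ≤ q'.head := by
      show (p'.last : α) ≤ (q'.head : α)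
      exact (p.last.2.2).trans (q.head.2.1)
    rcases eq_or_lt_of_le hph with he | hlt
    · have hlen : (p'.smash q' he).length = p.length + q.length := by simp [hp', hq']; rfl
      have := le_iSup (fun r : LTSeries ↥(Set.Icc P R) => (r.length : ℕ∞)) (p'.smash q' he)
      rw [hlen] at this
      exact_mod_cast this
    · have hlen : (p'.append q' hlt).length = p.length + q.length + 1 := by simp [hp', hq']; rfl
      have := le_iSup (fun r : LTSeries ↥(Set.Icc P R) => (r.length : ℕ∞)) (p'.append q' hlt)
      rw [hlen] at this
      refine le_trans ?_ this
      exact_mod_cast Nat.le_succ _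
  

end IntervalLength

/-- The length of a module, i.e. the Krull dimension of its submodule lattice,
as an element of `ℕ∞`. -/
noncomputable def moduleLength (A M : Type*) [CommRing A] [AddCommGroup M] [Module A M] : ℕ∞ :=
  (Order.krullDim (Submodule A M)).unbotD 0

/-- `lenQuot L K` is the length `λ(K/L)` of the subquotient `K/L` of `M`,
realized as the image of `K` in `M ⧸ L`. -/
noncomputable def lenQuot {A M : Type*} [CommRing A] [AddCommGroup M] [Module A M]
    (L K : Submodule A M) : ℕ∞ :=
  moduleLength A ↥(K.map L.mkQ)

section Bridge

variable {A M : Type*} [CommRing A] [AddCommGroup M] [Module A M]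


variable {A M : Type*} [CommRing A] [AddCommGroup M] [Module A M]

/-- The submodule lattice of the subquotient `K/L` is isomorphic to the interval `[L, K]`. -/
noncomputable def subquotIso (L K : Submodule A M) (h : L ≤ K) :
    Submodule A ↥(K.map L.mkQ) ≃o Set.Icc L K :=
  (Submodule.MapSubtype.orderIso (K.map L.mkQ)).trans
  { toFun := fun p' => ⟨Submodule.comap L.mkQ p'.1,
      ⟨fun x hx => by
          show L.mkQ x ∈ p'.1
          have : L.mkQ x = 0 := (Submodule.Quotient.mk_eq_zero L).2 hx
          rw [this]; exact p'.1.zero_mem,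
        le_trans (Submodule.comap_mono p'.2) (by
          rw [Submodule.comap_map_mkQ, sup_eq_right.2 h])⟩⟩
    invFun := fun q => ⟨Submodule.map L.mkQ q.1, Submodule.map_mono q.2.2⟩
    left_inv := fun p' => Subtype.ext
      (Submodule.map_comap_eq_of_surjective L.mkQ_surjective _)
    right_inv := fun q => Subtype.ext (by
      show Submodule.comap L.mkQ (Submodule.map L.mkQ q.1) = q.1
      rw [Submodule.comap_map_mkQ, sup_eq_right.2 q.2.1])
    map_rel_iff' := by
      intro p' q'
      exact Submodule.comap_le_comap_iff_of_surjective L.mkQ_surjective }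

lemma lenQuot_eq_iLen {L K : Submodule A M} (h : L ≤ K) : lenQuot L K = iLen L K := by
  rw [lenQuot, moduleLength, iLen, krullDim_eq_of_orderIso (subquotIso L K h)]


end Bridge

/-- Universe-polymorphic version of the Artin-Rees lemma. -/
lemma artinRees' {A : Type*} {M : Type*} [CommRing A] [IsNoetherianRing A] [AddCommGroup M]
    [Module A M] [Module.Finite A M] (I : Ideal A) (K : Submodule A M) :
    ∃ k : ℕ, ∀ n ≥ k, I ^ n • (⊤ : Submodule A M) ⊓ K
      = I ^ (n - k) • (I ^ k • (⊤ : Submodule A M) ⊓ K) := by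
  obtain ⟨m, f, hf⟩ := Module.Finite.exists_fin' A M
  let M' := (Fin m → A) ⧸ LinearMap.ker f
  let e : M' ≃ₗ[A] M := f.quotKerEquivOfSurjective hf
  obtain ⟨k, hk⟩ := Ideal.exists_pow_inf_eq_pow_smul I (K.comap (e : M' →ₗ[A] M))
  refine ⟨k, fun n hn => ?_⟩
  have h := congrArg (Submodule.map (e : M' →ₗ[A] M)) (hk n hn)
  have hmap : ∀ j : ℕ,
      Submodule.map (e : M' →ₗ[A] M)
        (I ^ j • (⊤ : Submodule A M') ⊓ K.comap (e : M' →ₗ[A] M))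
      = I ^ j • (⊤ : Submodule A M) ⊓ K := by
    intro j
    rw [Submodule.map_inf (e : M' →ₗ[A] M) (LinearEquiv.injective e), Submodule.map_smul'', Submodule.map_top,
      LinearEquiv.range e,
      Submodule.map_comap_eq, LinearEquiv.range, top_inf_eq]
  rw [Submodule.map_smul''] at h
  rw [hmap, hmap] at h
  exact h

/-- **Dade's Lemma** (Lemma 2.7): if `L ≤ K` are submodules of a finitely generated
module `M` over a Noetherian local ring `(A, 𝔪)` with `λ(K/L)` finite, and `I ≤ 𝔪`
is an ideal, then `λ(K/L) = Σ_{n ≥ 0} λ(((K ⊓ IⁿM) + I^{n+1}M)/((L ⊓ IⁿM) + I^{n+1}M))`,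
all but finitely many of the summands being zero. -/
theorem stmt_0 {A M : Type*} [CommRing A] [IsLocalRing A] [IsNoetherianRing A]
    [AddCommGroup M] [Module A M] [Module.Finite A M]
    (I : Ideal A) (hI : I ≤ IsLocalRing.maximalIdeal A)
    (L K : Submodule A M) (hLK : L ≤ K) (hfin : lenQuot L K < ⊤) :
    ∃ N : ℕ,
      (∀ n ≥ N,
        lenQuot ((L ⊓ I ^ n • (⊤ : Submodule A M)) + I ^ (n + 1) • (⊤ : Submodule A M))
          ((K ⊓ I ^ n • (⊤ : Submodule A M)) + I ^ (n + 1) • (⊤ : Submodule A M)) = 0) ∧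
      lenQuot L K = ∑ n ∈ Finset.range N,
        lenQuot ((L ⊓ I ^ n • (⊤ : Submodule A M)) + I ^ (n + 1) • (⊤ : Submodule A M))
          ((K ⊓ I ^ n • (⊤ : Submodule A M)) + I ^ (n + 1) • (⊤ : Submodule A M)) := by
  classical
  set F : ℕ → Submodule A M := fun n => I ^ n • ⊤ with hF
  set Ks : ℕ → Submodule A M := fun n => L ⊔ (K ⊓ F n) with hKsdef
  have hFanti : ∀ n, F (n + 1) ≤ F n := fun n =>
    Submodule.smul_mono_left (Ideal.pow_le_pow_right (Nat.le_succ n))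
  have hKsmono : ∀ n, Ks (n + 1) ≤ Ks n := fun n =>
    sup_le_sup_left (inf_le_inf_left K (hFanti n)) L
  have hKsanti : ∀ {a b : ℕ}, a ≤ b → Ks b ≤ Ks a := fun {a b} h =>
    antitone_nat_of_succ_le hKsmono h
  have hLKs : ∀ n, L ≤ Ks n := fun n => le_sup_left
  have hKsK : ∀ n, Ks n ≤ K := fun n => sup_le hLK inf_le_left
  have hKs0 : Ks 0 = K := by
    have : F 0 = ⊤ := by
      rw [hF]
      simp only [pow_zero]
      exact one_smul _ _
    rw [hKsdef]
    simp only [this, inf_top_eq]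
    exact sup_eq_right.2 hLK
  -- finiteness
  have hfinI : iLen L K ≠ ⊤ := by
    rw [← lenQuot_eq_iLen hLK]; exact hfin.ne
  have hgfin : ∀ n, iLen L (Ks n) ≠ ⊤ := by
    intro n
    have := iLen_add (hLKs n) (hKsK n)
    intro htop
    rw [htop] at this
    simp [this] at hfinI
  -- stabilization of the sequence `Ks`
  obtain ⟨v, ⟨N₀, hv⟩, hmin⟩ := wellFounded_lt.has_min
    (Set.range fun n => (iLen L (Ks n)).toNat) ⟨_, 0, rfl⟩
  have hval : ∀ n ≥ N₀, iLen L (Ks n) = iLen L (Ks N₀) := by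
    intro n hn
    have h1 : iLen L (Ks n) ≤ iLen L (Ks N₀) := by
      rw [iLen_add (hLKs n) (hKsanti hn)]
      exact le_self_add
    have h2 : (iLen L (Ks N₀)).toNat ≤ (iLen L (Ks n)).toNat := by
      have h3 : v ≤ (iLen L (Ks n)).toNat := Nat.not_lt.1 (hmin _ ⟨n, rfl⟩)
      have h4 : (iLen L (Ks N₀)).toNat = v := hv
      omega
    refine le_antisymm h1 ?_
    rw [← ENat.coe_toNat (hgfin N₀), ← ENat.coe_toNat (hgfin n)]
    exact_mod_cast h2
  have hadj : ∀ n ≥ N₀, Ks (n + 1) = Ks n := by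
    intro n hn
    have hadd := iLen_add (hLKs (n + 1)) (hKsmono n)
    rw [hval n hn, hval (n + 1) (le_trans hn (Nat.le_succ n))] at hadd
    have h0 : iLen (Ks (n + 1)) (Ks n) = 0 := by
      have h5 : iLen L (Ks N₀) + 0 = iLen L (Ks N₀) + iLen (Ks (n + 1)) (Ks n) := by
        rw [add_zero]; exact hadd
      exact (WithTop.add_left_cancel (hgfin N₀) h5).symm
    exact (iLen_eq_zero_iff (hKsmono n)).1 h0
  have hstab : ∀ n, N₀ ≤ n → Ks n = Ks N₀ := by
    intro n
    induction n with
    | zero => intro hn; rw [Nat.le_zero.1 hn]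
    | succ m ih =>
      intro hn
      rcases Nat.lt_or_ge m N₀ with h | h
      · have hmeq : N₀ = m + 1 := by omega
        rw [hmeq]
      · rw [hadj m h, ih h]
  -- Artin-Rees and Nakayama: the stable value is `L`
  obtain ⟨k, hk⟩ := artinRees' I K
  set N₁ := max N₀ k with hN₁
  have hW : Ks N₁ ≤ L ⊔ I • Ks N₁ := by
    have h1 : F (N₁ + 1) ⊓ K = I • (F N₁ ⊓ K) := by
      have e1 := hk (N₁ + 1) (by omega)
      have e2 := hk N₁ (le_max_right _ _)
      rw [show N₁ + 1 - k = (N₁ - k) + 1 by omega, pow_succ' I (N₁ - k), mul_smul] at e1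
      rw [← e2] at e1
      exact e1
    have h2 : Ks N₁ = Ks (N₁ + 1) := (hadj N₁ (le_max_left _ _)).symm
    calc Ks N₁ = L ⊔ (K ⊓ F (N₁ + 1)) := h2
      _ = L ⊔ (F (N₁ + 1) ⊓ K) := by rw [inf_comm]
      _ = L ⊔ I • (F N₁ ⊓ K) := by rw [h1]
      _ ≤ L ⊔ I • Ks N₁ := by
          refine sup_le_sup_left (smul_mono_right I ?_) L
          rw [inf_comm]
          exact le_sup_right
  have hjac : I ≤ Ideal.jacobson ⊥ := by
    rw [IsLocalRing.jacobson_eq_maximalIdeal ⊥ bot_ne_top]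
    exact hI
  have hWL : Ks N₁ ≤ L :=
    Submodule.le_of_le_smul_of_le_jacobson_bot (IsNoetherian.noetherian _) hjac hW
  have hKsL : ∀ n ≥ N₀, Ks n = L := by
    intro n hn
    rw [hstab n hn, ← hstab N₁ (le_max_left _ _)]
    exact le_antisymm hWL (hLKs N₁)
  have hKF : ∀ n ≥ N₀, K ⊓ F n ≤ L := fun n hn => le_sup_right.trans (hKsL n hn).le
  -- identification of the summands
  have hsummand : ∀ n : ℕ,
      lenQuot (L ⊓ F n + F (n + 1)) (K ⊓ F n + F (n + 1)) = iLen (Ks (n + 1)) (Ks n) := by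
    intro n
    have hLFX : L ⊓ F n ≤ K ⊓ F n := inf_le_inf_right _ hLK
    have hKFX : K ⊓ F (n + 1) ≤ K ⊓ F n := inf_le_inf_left K (hFanti n)
    have e2 : (K ⊓ F n) ⊔ (L ⊓ F n ⊔ F (n + 1)) = K ⊓ F n ⊔ F (n + 1) := by
      rw [← sup_assoc, sup_eq_left.2 hLFX]
    have eFX : F (n + 1) ⊓ (K ⊓ F n) = K ⊓ F (n + 1) := by
      rw [inf_left_comm, inf_eq_left.2 (hFanti n)]
    have e1 : (K ⊓ F n) ⊓ (L ⊓ F n ⊔ F (n + 1)) = L ⊓ F n ⊔ K ⊓ F (n + 1) := by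
      rw [inf_comm (K ⊓ F n) (L ⊓ F n ⊔ F (n + 1)), sup_inf_assoc_of_le (F (n + 1)) hLFX, eFX]
    have e4 : (K ⊓ F n) ⊔ (L ⊔ K ⊓ F (n + 1)) = Ks n := by
      rw [sup_left_comm, sup_eq_left.2 hKFX]
    have e3 : (K ⊓ F n) ⊓ (L ⊔ K ⊓ F (n + 1)) = L ⊓ F n ⊔ K ⊓ F (n + 1) := by
      rw [sup_comm L (K ⊓ F (n + 1)), inf_comm (K ⊓ F n) (K ⊓ F (n + 1) ⊔ L),
        sup_inf_assoc_of_le L hKFX, ← inf_assoc, inf_eq_left.2 hLK,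
        sup_comm (K ⊓ F (n + 1)) (L ⊓ F n)]
    have hYle : L ⊓ F n + F (n + 1) ≤ K ⊓ F n + F (n + 1) := sup_le_sup_right hLFX _
    rw [lenQuot_eq_iLen hYle]
    show iLen (L ⊓ F n ⊔ F (n + 1)) (K ⊓ F n ⊔ F (n + 1)) = _
    rw [← e2, ← iLen_diamond (K ⊓ F n) (L ⊓ F n ⊔ F (n + 1)), e1]
    show _ = iLen (L ⊔ K ⊓ F (n + 1)) (Ks n)
    rw [← e4, ← iLen_diamond (K ⊓ F n) (L ⊔ K ⊓ F (n + 1)), e3]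
  -- telescoping sum
  have tele : ∀ m : ℕ, iLen (Ks m) K = ∑ n ∈ Finset.range m, iLen (Ks (n + 1)) (Ks n) := by
    intro m
    induction m with
    | zero =>
      rw [Finset.range_zero, Finset.sum_empty, hKs0]
      exact iLen_self K
    | succ m ih =>
      rw [Finset.sum_range_succ, ← ih, iLen_add (hKsmono m) (hKsK m), add_comm]
  refine ⟨N₀, ?_, ?_⟩
  · intro n hn
    have heq : K ⊓ F n + F (n + 1) = L ⊓ F n + F (n + 1) := by
      have h6 : K ⊓ F n = L ⊓ F n := le_antisymm (le_inf (hKF n hn) inf_le_right)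
        (inf_le_inf_right _ hLK)
      rw [show K ⊓ F n + F (n + 1) = K ⊓ F n ⊔ F (n + 1) from rfl, h6]
      rfl
    rw [heq, lenQuot_eq_iLen le_rfl]
    exact iLen_self _
  · calc lenQuot L K = iLen L K := lenQuot_eq_iLen hLK
      _ = iLen (Ks N₀) K := by rw [hKsL N₀ le_rfl]
      _ = ∑ n ∈ Finset.range N₀, iLen (Ks (n + 1)) (Ks n) := tele N₀
      _ = _ := by
        refine Finset.sum_congr rfl fun n _ => ?_
        exact (hsummand n).symm
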